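/- Let (Ω, μ) be a probability space, T a natural number, γ > 0 and λ ≥ 0 real numbers, and U a nonempty type (of hedging policies). For each u ∈ U and each time τ ∈ Fin (T+1), let A_τ(u), G_τ(u) : Ω → ℝ be random variables in L²(μ) with G_τ(u) ≥ 0 μ-almost everywhere, and for ε ∈ ℝ set Π_τ(ε, u) := A_τ(u) + ε·G_τ(u). Define V(ε, u) := E[−Π_0(ε, u)] − λ·∑_{τ=0}^{T} γ^τ·√(Var(Π_τ(ε, u))). Let ε₀ ≥ 0 be such that for every u ∈ U and every τ, either Var(G_τ(u)) = 0 or ε₀·Var(G_τ(u)) ≥ −Cov(A_τ(u), G_τ(u)), and assume that for every ε ≥ ε₀ the set {V(ε, u) : u ∈ U} is bounded above. Then the option price C(ε) := −⨆_{u ∈ U} V(ε, u) is monotone nondecreasing on [ε₀, ∞). -/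

import Mathlib

open MeasureTheory

/-- Variance `Var(Z) := E[(Z − E[Z])²]`. -/
noncomputable def Var {Ω : Type*} [MeasurableSpace Ω] (μ : Measure Ω) (Z : Ω → ℝ) : ℝ :=
  ∫ ω, (Z ω - ∫ ω', Z ω' ∂μ) ^ 2 ∂μ

/-- Covariance `Cov(X, Y) := E[(X − E[X])(Y − E[Y])]`. -/
noncomputable def Cov {Ω : Type*} [MeasurableSpace Ω] (μ : Measure Ω) (X Y : Ω → ℝ) : ℝ :=
  ∫ ω, (X ω - ∫ ω', X ω' ∂μ) * (Y ω - ∫ ω', Y ω' ∂μ) ∂μ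

section Aux

variable {Ω : Type*} [MeasurableSpace Ω] {μ : Measure Ω}

lemma aux_mul_integrable {f g : Ω → ℝ} (hf : MemLp f 2 μ) (hg : MemLp g 2 μ) :
    Integrable (fun ω => f ω * g ω) μ := by
  refine (hf.integrable_sq.add hg.integrable_sq).mono'
    (hf.aestronglyMeasurable.mul hg.aestronglyMeasurable) (ae_of_all _ fun ω => ?_)
  rw [Real.norm_eq_abs, abs_mul]
  simp only [Pi.add_apply]
  nlinarith [sq_nonneg (|f ω| - |g ω|), sq_abs (f ω), sq_abs (g ω), abs_nonneg (f ω),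
    abs_nonneg (g ω)]

lemma aux_var_nonneg (μ : Measure Ω) (Z : Ω → ℝ) : 0 ≤ Var μ Z :=
  integral_nonneg fun ω => sq_nonneg _

lemma aux_var_expand [IsProbabilityMeasure μ] {X Y : Ω → ℝ}
    (hX : MemLp X 2 μ) (hY : MemLp Y 2 μ) (ε : ℝ) :
    Var μ (fun ω => X ω + ε * Y ω)
      = Var μ X + 2 * ε * Cov μ X Y + ε ^ 2 * Var μ Y := by
  have hiX : Integrable X μ := hX.integrable one_le_two
  have hiY : Integrable Y μ := hY.integrable one_le_two
  have hXc : MemLp (fun ω => X ω - ∫ ω', X ω' ∂μ) 2 μ := hX.sub (memLp_const _)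
  have hYc : MemLp (fun ω => Y ω - ∫ ω', Y ω' ∂μ) 2 μ := hY.sub (memLp_const _)
  have hmean : ∫ ω, (X ω + ε * Y ω) ∂μ = (∫ ω', X ω' ∂μ) + ε * ∫ ω', Y ω' ∂μ := by
    rw [integral_add hiX (hiY.const_mul ε), integral_const_mul]
  unfold Var Cov
  rw [hmean]
  have hptw : ∀ ω : Ω, (X ω + ε * Y ω - ((∫ ω', X ω' ∂μ) + ε * ∫ ω', Y ω' ∂μ)) ^ 2
      = (X ω - ∫ ω', X ω' ∂μ) ^ 2
        + ((2 * ε) * ((X ω - ∫ ω', X ω' ∂μ) * (Y ω - ∫ ω', Y ω' ∂μ))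
          + ε ^ 2 * (Y ω - ∫ ω', Y ω' ∂μ) ^ 2) := fun ω => by ring
  simp_rw [hptw]
  have hint1 : Integrable (fun ω => 2 * ε * ((X ω - ∫ ω', X ω' ∂μ) * (Y ω - ∫ ω', Y ω' ∂μ))) μ :=
    (aux_mul_integrable hXc hYc).const_mul _
  have hint2 : Integrable (fun ω => ε ^ 2 * (Y ω - ∫ ω', Y ω' ∂μ) ^ 2) μ :=
    hYc.integrable_sq.const_mul _
  have hint12 : Integrable (fun ω => 2 * ε * ((X ω - ∫ ω', X ω' ∂μ) * (Y ω - ∫ ω', Y ω' ∂μ))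
      + ε ^ 2 * (Y ω - ∫ ω', Y ω' ∂μ) ^ 2) μ := hint1.add hint2
  rw [integral_add hXc.integrable_sq hint12, integral_add hint1 hint2,
    integral_const_mul, integral_const_mul]
  ring

lemma aux_var_mono [IsProbabilityMeasure μ] {X Y : Ω → ℝ}
    (hX : MemLp X 2 μ) (hY : MemLp Y 2 μ) {ε₀ ε₁ ε₂ : ℝ}
    (hcase : Var μ Y = 0 ∨ ε₀ * Var μ Y ≥ -(Cov μ X Y))
    (hε₀ : 0 ≤ ε₀) (h1 : ε₀ ≤ ε₁) (h2 : ε₁ ≤ ε₂) :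
    Var μ (fun ω => X ω + ε₁ * Y ω) ≤ Var μ (fun ω => X ω + ε₂ * Y ω) := by
  have hv : 0 ≤ Var μ Y := aux_var_nonneg μ Y
  rw [aux_var_expand hX hY, aux_var_expand hX hY]
  rcases hcase with h | h
  · -- Var Y = 0 ⇒ Y is a.e. constant ⇒ Cov = 0
    have hYc : MemLp (fun ω => Y ω - ∫ ω', Y ω' ∂μ) 2 μ := hY.sub (memLp_const _)
    have hzero : (fun ω => (Y ω - ∫ ω', Y ω' ∂μ) ^ 2) =ᵐ[μ] 0 :=
      (integral_eq_zero_iff_of_nonneg (fun ω => sq_nonneg _) hYc.integrable_sq).mp h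
    have hg0 : (fun ω => Y ω - ∫ ω', Y ω' ∂μ) =ᵐ[μ] 0 := by
      filter_upwards [hzero] with ω hω
      have := pow_eq_zero_iff (n := 2) (by norm_num) |>.mp hω
      simpa using this
    have hcov : Cov μ X Y = 0 := by
      unfold Cov
      rw [show (0 : ℝ) = ∫ _ : Ω, (0 : ℝ) ∂μ by simp]
      refine integral_congr_ae ?_
      filter_upwards [hg0] with ω hω
      simp [hω]
    rw [h, hcov]
    ring_nf
    exact le_refl _
  · nlinarith [mul_nonneg (sub_nonneg.2 h2) (add_nonneg (by linarith : (0:ℝ) ≤ Cov μ X Y + ε₀ * Var μ Y) (by linarith : (0:ℝ) ≤ Cov μ X Y + ε₀ * Var μ Y)),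
      mul_nonneg (mul_nonneg (sub_nonneg.2 h2) (by linarith : (0:ℝ) ≤ ε₂ + ε₁ - 2 * ε₀)) hv]

end Aux

/-- ε-monotonicity of the adaptive-QLBS option price: with portfolio value
`Π_τ(ε, u) = A_τ(u) + ε·G_τ(u)` affine in the transaction-cost rate `ε`,
`G_τ(u) ≥ 0` a.e., and value
`V(ε, u) = E[−Π_0(ε, u)] − λ·∑_τ γ^τ·√(Var(Π_τ(ε, u)))`, the option price
`C(ε) := −⨆_u V(ε, u)` is nondecreasing on `[ε₀, ∞)` for `ε₀` large enough
uniformly over policies. -/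
theorem stmt_7 {Ω : Type*} [MeasurableSpace Ω] (μ : Measure Ω) [IsProbabilityMeasure μ]
    (T : ℕ) (γ lam : ℝ) (hγ : 0 < γ) (hlam : 0 ≤ lam)
    {U : Type*} [Nonempty U]
    (A G : U → Fin (T + 1) → Ω → ℝ)
    (hA : ∀ u τ, MemLp (A u τ) 2 μ) (hG : ∀ u τ, MemLp (G u τ) 2 μ)
    (hGpos : ∀ u τ, ∀ᵐ ω ∂μ, 0 ≤ G u τ ω)
    (ε₀ : ℝ) (hε₀ : 0 ≤ ε₀)
    (hε₀' : ∀ u τ, Var μ (G u τ) = 0 ∨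
      ε₀ * Var μ (G u τ) ≥ -(Cov μ (A u τ) (G u τ)))
    (hbdd : ∀ ε : ℝ, ε₀ ≤ ε → BddAbove (Set.range fun u : U =>
      (∫ ω, -(A u 0 ω + ε * G u 0 ω) ∂μ) -
        lam * ∑ τ : Fin (T + 1),
          γ ^ (τ : ℕ) * Real.sqrt (Var μ (fun ω => A u τ ω + ε * G u τ ω)))) :
    MonotoneOn (fun ε : ℝ => -(⨆ u : U,
      ((∫ ω, -(A u 0 ω + ε * G u 0 ω) ∂μ) -
        lam * ∑ τ : Fin (T + 1),
          γ ^ (τ : ℕ) * Real.sqrt (Var μ (fun ω => A u τ ω + ε * G u τ ω)))))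
      (Set.Ici ε₀) := by
  intro ε₁ hε₁ ε₂ hε₂ h12
  simp only [Set.mem_Ici] at hε₁ hε₂
  refine neg_le_neg ?_
  refine ciSup_mono (hbdd ε₁ hε₁) fun u => ?_
  refine sub_le_sub ?_ ?_
  · refine integral_mono_ae
      (((hA u 0).integrable one_le_two).add (((hG u 0).integrable one_le_two).const_mul ε₂)).neg
      (((hA u 0).integrable one_le_two).add (((hG u 0).integrable one_le_two).const_mul ε₁)).neg
      ?_
    filter_upwards [hGpos u 0] with ω hg
    have : ε₁ * G u 0 ω ≤ ε₂ * G u 0 ω := mul_le_mul_of_nonneg_right h12 hg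
    linarith
  · refine mul_le_mul_of_nonneg_left (Finset.sum_le_sum fun τ _ => ?_) hlam
    refine mul_le_mul_of_nonneg_left (Real.sqrt_le_sqrt ?_) (pow_nonneg hγ.le _)
    exact aux_var_mono (hA u τ) (hG u τ) (hε₀' u τ) hε₀ hε₁ h12
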